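/- Let p be a prime, let f = (f_1,…,f_t) be a polynomial mapping with f_1,…,f_t ∈ ℤ_p[x_1,…,x_n], let g ∈ ℤ_p[x_1,…,x_n], and suppose n ≥ t+1. Let k, l be positive integers and a ∈ ℤ_p^n such that f_i(a) ≡ 0 mod p for all i, g(a) ≡ 0 mod p, and the (t+1)×n Jacobian matrix of (f_1,…,f_t,g) at a has rank t+1 modulo p. Then the set A_{k,l} = {x ∈ a + (pℤ_p)^n : f_i(x) ≡ 0 mod p^k for all i, and g(x) ≡ 0 mod p^l} has Haar measure μ(A_{k,l}) = p^{−n−(k−1)t−l+1}. -/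

import Mathlib

open MeasureTheory MvPolynomial

/-! Lemma `notAkl_ff`: the measure of
`A_{k,l} = {x ∈ a+(pℤ_p)^n : f_i(x) ≡ 0 mod p^k for all i, g(x) ≡ 0 mod p^l}`
equals `p^{-n-(k-1)t-l+1}` when the `(t+1)×n` Jacobian of `(f_1,…,f_t,g)` at `a`
has rank `t+1` modulo `p`. -/

noncomputable instance (p : ℕ) [Fact p.Prime] : MeasurableSpace ℤ_[p] := borel _
instance (p : ℕ) [Fact p.Prime] : BorelSpace ℤ_[p] := ⟨rfl⟩

/-- The Haar measure on `ℤ_p^n`, normalized so that `μ(ℤ_p^n) = 1`. -/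
noncomputable def padicHaar (p : ℕ) [Fact p.Prime] (n : ℕ) : Measure (Fin n → ℤ_[p]) :=
  Measure.addHaarMeasure ⟨⟨Set.univ, isCompact_univ⟩, by simp⟩

namespace AklProof

variable {p : ℕ} [hp : Fact p.Prime] {n : ℕ}

instance : (padicHaar p n).IsAddHaarMeasure := by unfold padicHaar; infer_instance

lemma padicHaar_univ : padicHaar p n Set.univ = 1 :=
  Measure.addHaarMeasure_self (K₀ := ⟨⟨Set.univ, isCompact_univ⟩, by simp⟩)

lemma p_ne_zero : (p : ℤ_[p]) ≠ 0 := by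
  exact_mod_cast Nat.cast_ne_zero.mpr hp.out.pos.ne'

lemma dvd_iff_tzp (m : ℕ) (x : ℤ_[p]) : (p:ℤ_[p])^m ∣ x ↔ PadicInt.toZModPow m x = 0 := by
  rw [← RingHom.mem_ker, PadicInt.ker_toZModPow, Ideal.mem_span_singleton]

lemma dvd_sub_iff_tzp (m : ℕ) (x y : ℤ_[p]) :
    (p:ℤ_[p])^m ∣ x - y ↔ PadicInt.toZModPow m x = PadicInt.toZModPow m y := by
  rw [dvd_iff_tzp, map_sub, sub_eq_zero]

lemma dvd_p_iff (x : ℤ_[p]) : (p:ℤ_[p]) ∣ x ↔ PadicInt.toZMod x = 0 := by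
  rw [← RingHom.mem_ker, PadicInt.ker_toZMod, PadicInt.maximalIdeal_eq_span_p,
    Ideal.mem_span_singleton]

lemma dvd_p_sub_iff (x y : ℤ_[p]) :
    (p:ℤ_[p]) ∣ x - y ↔ PadicInt.toZMod x = PadicInt.toZMod y := by
  rw [dvd_p_iff, map_sub, sub_eq_zero]

/-! ### measurability and coset measure -/

lemma meas_dvd_set (c : ℕ) (L : ℤ_[p]) (f : (Fin n → ℤ_[p]) → ℤ_[p]) (hf : Continuous f) :
    MeasurableSet {x : Fin n → ℤ_[p] | (p:ℤ_[p])^c ∣ f x - L} := by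
  have : {x : Fin n → ℤ_[p] | (p:ℤ_[p])^c ∣ f x - L} =
      (fun x => f x - L) ⁻¹' {z : ℤ_[p] | ‖z‖ ≤ (p:ℝ)^(-(c:ℤ))} := by
    ext x
    simp only [Set.mem_setOf_eq, Set.mem_preimage]
    rw [PadicInt.norm_le_pow_iff_mem_span_pow, Ideal.mem_span_singleton]
  rw [this]
  exact (IsClosed.preimage (hf.sub continuous_const)
    (isClosed_le continuous_norm continuous_const)).measurableSet

lemma meas_coset (m : ℕ) (b : Fin n → ℤ_[p]) :
    MeasurableSet {x : Fin n → ℤ_[p] | ∀ i, (p:ℤ_[p])^m ∣ x i - b i} := by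
  have : {x : Fin n → ℤ_[p] | ∀ i, (p:ℤ_[p])^m ∣ x i - b i}
      = ⋂ i, {x : Fin n → ℤ_[p] | (p:ℤ_[p])^m ∣ x i - b i} := by
    ext x; simp
  rw [this]
  exact MeasurableSet.iInter fun i => meas_dvd_set m (b i) _ (continuous_apply i)

lemma measure_coset (m : ℕ) (b : Fin n → ℤ_[p]) :
    padicHaar p n {x : Fin n → ℤ_[p] | ∀ i, (p:ℤ_[p])^m ∣ x i - b i}
      = (p:ENNReal) ^ (-((m:ℤ) * n)) := by
  classical
  set T : (Fin n → ℤ_[p]) → (Fin n → ZMod (p^m)) := fun x i => PadicInt.toZModPow m (x i) with hT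
  set L : (Fin n → ZMod (p^m)) → (Fin n → ℤ_[p]) := fun v i => ((v i).val : ℤ_[p]) with hL
  have hTL : ∀ v, T (L v) = v := by
    intro v; funext i
    simp [hT, hL, map_natCast, ZMod.natCast_zmod_val]
  have hker : ∀ (x b : Fin n → ℤ_[p]),
      (∀ i, (p:ℤ_[p])^m ∣ x i - b i) ↔ T x = T b := by
    intro x b
    constructor
    · intro h; funext i; exact (dvd_sub_iff_tzp m _ _).1 (h i)
    · intro h i; exact (dvd_sub_iff_tzp m _ _).2 (congrFun h i)
  have hcoset_eq : ∀ v, T ⁻¹' {v} = {x : Fin n → ℤ_[p] | ∀ i, (p:ℤ_[p])^m ∣ x i - L v i} := by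
    intro v; ext x
    simp only [Set.mem_preimage, Set.mem_singleton_iff, Set.mem_setOf_eq, hker, hTL]
  have hmeas : ∀ v, MeasurableSet (T ⁻¹' {v}) := by
    intro v; rw [hcoset_eq]; exact meas_coset m (L v)
  have htrans : ∀ v : Fin n → ZMod (p^m),
      padicHaar p n (T ⁻¹' {v}) = padicHaar p n (T ⁻¹' {T 0}) := by
    intro v
    have : T ⁻¹' {v} = (fun x => (-(L v)) + x) ⁻¹' (T ⁻¹' {T 0}) := by
      ext x
      simp only [Set.mem_preimage, Set.mem_singleton_iff]
      conv_lhs => rw [← hTL v]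
      rw [← hker, ← hker]
      constructor
      · intro h i; simpa [Pi.add_apply, Pi.neg_apply, Pi.zero_apply, neg_add_eq_sub] using h i
      · intro h i; simpa [Pi.add_apply, Pi.neg_apply, Pi.zero_apply, neg_add_eq_sub] using h i
    rw [this]
    exact measure_preimage_add _ _ _
  have hcover : (Set.univ : Set (Fin n → ℤ_[p])) = ⋃ v, T ⁻¹' {v} := by
    ext x; simp
  have hdisj : Pairwise (Function.onFun Disjoint fun v : Fin n → ZMod (p^m) => T ⁻¹' {v}) := by
    intro v w hvw
    simp only [Function.onFun, Set.disjoint_left]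
    rintro x hx hx'
    exact hvw (hx.symm.trans hx')
  have hsum : (1 : ENNReal) = ∑ v : Fin n → ZMod (p^m), padicHaar p n (T ⁻¹' {v}) := by
    have h1 : padicHaar p n (Set.univ) = 1 := padicHaar_univ
    rw [← h1, hcover, measure_iUnion hdisj hmeas, tsum_fintype]
  have hcard : (1 : ENNReal)
      = (Fintype.card (Fin n → ZMod (p^m)) : ENNReal) * padicHaar p n (T ⁻¹' {T 0}) := by
    rw [hsum]
    rw [Finset.sum_congr rfl (fun v _ => htrans v), Finset.sum_const, Finset.card_univ]
    simp [nsmul_eq_mul]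
  have hcardval : (Fintype.card (Fin n → ZMod (p^m)) : ENNReal) = (p:ENNReal) ^ (m * n) := by
    rw [Fintype.card_fun, ZMod.card, Fintype.card_fin]
    push_cast
    rw [← pow_mul]
  have hp0 : (p:ENNReal) ≠ 0 := Nat.cast_ne_zero.mpr hp.out.pos.ne'
  have hne0 : ((p:ENNReal) ^ (m*n)) ≠ 0 := pow_ne_zero _ hp0
  have hnetop : ((p:ENNReal) ^ (m*n)) ≠ ⊤ :=
    ENNReal.pow_ne_top (ENNReal.natCast_ne_top p)
  have hval : padicHaar p n (T ⁻¹' {T 0}) = ((p:ENNReal) ^ (m*n))⁻¹ := by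
    rw [hcardval] at hcard
    rw [← one_mul (padicHaar p n (T ⁻¹' {T 0})), ← ENNReal.inv_mul_cancel hne0 hnetop,
      mul_assoc, ← hcard, mul_one]
  have final : {x : Fin n → ℤ_[p] | ∀ i, (p:ℤ_[p])^m ∣ x i - b i} = T ⁻¹' {T b} := by
    ext x; simp only [Set.mem_setOf_eq, Set.mem_preimage, Set.mem_singleton_iff, hker]
  rw [final, htrans (T b), hval,
    ENNReal.zpow_neg, ← zpow_natCast]
  congr 1

/-! ### polynomial lemmas -/

lemma continuous_mveval (f : MvPolynomial (Fin n) ℤ_[p]) :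
    Continuous (fun x : Fin n → ℤ_[p] => eval x f) := by
  induction f using MvPolynomial.induction_on with
  | C a => simpa using continuous_const
  | add f g hf hg => simp only [eval_add]; exact hf.add hg
  | mul_X f i hf => simp only [eval_mul, eval_X]; exact hf.mul (continuous_apply i)

lemma eval_sub_dvd (c : ℤ_[p]) (f : MvPolynomial (Fin n) ℤ_[p]) (b y : Fin n → ℤ_[p])
    (hy : ∀ i, c ∣ y i) : c ∣ eval (b + y) f - eval b f := by
  induction f using MvPolynomial.induction_on with
  | C a => simp
  | add f g hf hg =>
    simp only [eval_add]
    have key : eval (b+y) f + eval (b+y) g - (eval b f + eval b g)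
        = (eval (b+y) f - eval b f) + (eval (b+y) g - eval b g) := by ring
    rw [key]; exact dvd_add hf hg
  | mul_X f i hf =>
    simp only [eval_mul, eval_X]
    have key : eval (b+y) f * (b+y) i - eval b f * b i
        = (eval (b+y) f - eval b f) * b i + eval (b+y) f * y i := by
      simp only [Pi.add_apply]; ring
    rw [key]
    exact dvd_add (hf.mul_right _) ((hy i).mul_left _)

lemma eval_taylor (c : ℤ_[p]) (f : MvPolynomial (Fin n) ℤ_[p]) (b y : Fin n → ℤ_[p])
    (hy : ∀ i, c ∣ y i) :
    c^2 ∣ eval (b + y) f - eval b f - ∑ j, eval b (pderiv j f) * y j := by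
  induction f using MvPolynomial.induction_on with
  | C a => simp
  | add f g hf hg =>
    simp only [eval_add, map_add]
    have key : eval (b+y) f + eval (b+y) g - (eval b f + eval b g)
          - ∑ j, (eval b (pderiv j f) + eval b (pderiv j g)) * y j
        = (eval (b+y) f - eval b f - ∑ j, eval b (pderiv j f) * y j)
          + (eval (b+y) g - eval b g - ∑ j, eval b (pderiv j g) * y j) := by
      simp only [add_mul, Finset.sum_add_distrib]; ring
    rw [key]; exact dvd_add hf hg
  | mul_X f i hf =>
    have hder : ∀ j, eval b (pderiv j (f * X i))
        = eval b (pderiv j f) * b i + eval b f * (if i = j then 1 else 0) := by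
      intro j
      rw [pderiv_mul, pderiv_X]
      simp only [eval_add, eval_mul, eval_X]
      congr 1
      by_cases h : i = j <;> simp [h, Pi.single_apply]
    have hsum : ∑ j, eval b (pderiv j (f * X i)) * y j
        = (∑ j, eval b (pderiv j f) * y j) * b i + eval b f * y i := by
      simp only [hder, add_mul, Finset.sum_add_distrib]
      congr 1
      · rw [Finset.sum_mul]; congr 1; funext j; ring
      · rw [Finset.sum_eq_single i]
        · simp
        · intro j _ hji; simp [Ne.symm hji]
        · simp
    simp only [eval_mul, eval_X, hsum]
    have key : eval (b+y) f * (b+y) i - eval b f * b i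
          - ((∑ j, eval b (pderiv j f) * y j) * b i + eval b f * y i)
        = (eval (b+y) f - eval b f - ∑ j, eval b (pderiv j f) * y j) * b i
          + (eval (b+y) f - eval b f) * y i := by
      simp only [Pi.add_apply]; ring
    rw [key]
    refine dvd_add (hf.mul_right _) ?_
    rw [pow_two]
    exact mul_dvd_mul (eval_sub_dvd c f b y hy) (hy i)

lemma eval_dvd_trans (c m : ℕ) (hcm : c ≤ m) (f : MvPolynomial (Fin n) ℤ_[p])
    (b x : Fin n → ℤ_[p]) (hx : ∀ i, (p:ℤ_[p])^m ∣ x i - b i)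
    (hb : (p:ℤ_[p])^c ∣ eval b f) : (p:ℤ_[p])^c ∣ eval x f := by
  have h2 : b + (x - b) = x := by funext i; simp
  have h1 : (p:ℤ_[p])^m ∣ eval x f - eval b f := by
    have := eval_sub_dvd ((p:ℤ_[p])^m) f b (x - b) (fun i => by simpa using hx i)
    rwa [h2] at this
  have : eval x f = eval b f + (eval x f - eval b f) := by ring
  rw [this]
  exact dvd_add hb ((pow_dvd_pow _ hcm).trans h1)

lemma toZMod_eval_congr (f : MvPolynomial (Fin n) ℤ_[p]) (a b : Fin n → ℤ_[p])
    (hab : ∀ i, (p:ℤ_[p]) ∣ b i - a i) :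
    PadicInt.toZMod (eval b f) = PadicInt.toZMod (eval a f) := by
  rw [← dvd_p_sub_iff]
  have h2 : a + (b - a) = b := by funext i; simp
  have := eval_sub_dvd (p:ℤ_[p]) f a (b - a) (fun i => by simpa using hab i)
  rwa [h2] at this

/-! ### counting lemmas -/

lemma fiber_card {α β : Type*} [AddCommGroup α] [AddCommGroup β] [Fintype α] [Fintype β]
    (φ : α →+ β) (hφ : Function.Surjective φ) (y : β) :
    Nat.card {x : α | φ x = y} * Fintype.card β = Fintype.card α := by
  obtain ⟨x0, hx0⟩ := hφ y
  have e : {x : α | φ x = y} ≃ (φ.ker : AddSubgroup α) := by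
    refine ⟨fun x => ⟨x.1 - x0, ?_⟩, fun z => ⟨x0 + z.1, ?_⟩, ?_, ?_⟩
    · have hx := x.2
      simp only [Set.mem_setOf_eq] at hx
      simp [AddMonoidHom.mem_ker, map_sub, hx, hx0]
    · have := z.2
      simp only [AddMonoidHom.mem_ker] at this
      simp [Set.mem_setOf_eq, map_add, this, hx0]
    · intro x; ext; simp
    · intro z; ext; simp
  have e2 : (α ⧸ φ.ker) ≃+ β := QuotientAddGroup.quotientKerEquivOfSurjective φ hφ
  have h1 : Nat.card α = Nat.card (α ⧸ φ.ker) * Nat.card φ.ker :=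
    AddSubgroup.card_eq_card_quotient_mul_card_addSubgroup φ.ker
  rw [Nat.card_congr e, ← Nat.card_eq_fintype_card, ← Nat.card_eq_fintype_card, h1,
    Nat.card_congr e2.toEquiv]
  ring

lemma rank_surj {t : ℕ} (M : Matrix (Fin (t+1)) (Fin n) (ZMod p))
    (hrank : M.rank = t + 1) : Function.Surjective M.mulVecLin := by
  rw [← LinearMap.range_eq_top]
  apply Submodule.eq_top_of_finrank_eq
  rw [← Matrix.rank, hrank]
  simp [Module.finrank_pi]

lemma count_subsystem {t : ℕ} (M : Matrix (Fin (t+1)) (Fin n) (ZMod p))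
    (hM : Function.Surjective M.mulVecLin) (S : Finset (Fin (t+1))) (v : Fin (t+1) → ZMod p) :
    Nat.card {h : Fin n → ZMod p | ∀ i ∈ S, M.mulVec h i = v i} * p ^ S.card = p ^ n := by
  classical
  set φ : (Fin n → ZMod p) →ₗ[ZMod p] (S → ZMod p) :=
    (LinearMap.funLeft (ZMod p) (ZMod p) (Subtype.val : S → Fin (t+1))).comp M.mulVecLin with hφ
  have hsurj : Function.Surjective φ :=
    (LinearMap.funLeft_surjective_of_injective (ZMod p) (ZMod p)
      (Subtype.val : S → Fin (t+1)) Subtype.val_injective).comp hM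
  have hfib : {h : Fin n → ZMod p | ∀ i ∈ S, M.mulVec h i = v i}
      = {h : Fin n → ZMod p | φ.toAddMonoidHom h = fun i : S => v i} := by
    ext h
    simp only [Set.mem_setOf_eq, hφ, LinearMap.coe_comp, Function.comp_apply,
      LinearMap.toAddMonoidHom_coe, LinearMap.funLeft_apply, funext_iff]
    constructor
    · intro H i; exact H i.1 i.2
    · intro H i hi; exact H ⟨i, hi⟩
  have := fiber_card φ.toAddMonoidHom hsurj (fun i : S => v i)
  rw [← hfib] at this
  rw [Fintype.card_fun, ZMod.card, Fintype.card_coe, Fintype.card_fun, ZMod.card,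
    Fintype.card_fin] at this
  exact this

/-! ### Hensel condition -/

lemma hensel_cond (m : ℕ) (hm : 1 ≤ m) (f : MvPolynomial (Fin n) ℤ_[p]) (b : Fin n → ℤ_[p])
    (u : ℤ_[p]) (hu : eval b f = (p:ℤ_[p])^m * u) (row : Fin n → ZMod p)
    (hrow : ∀ j, row j = PadicInt.toZMod (eval b (pderiv j f))) (h : Fin n → ZMod p) :
    (p:ℤ_[p])^(m+1) ∣ eval (fun i => b i + (p:ℤ_[p])^m * ((h i).val : ℤ_[p])) f
      ↔ ∑ j, row j * h j = -PadicInt.toZMod u := by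
  classical
  set y : Fin n → ℤ_[p] := fun i => (p:ℤ_[p])^m * ((h i).val : ℤ_[p]) with hy_def
  have hy : ∀ i, (p:ℤ_[p])^m ∣ y i := fun i => dvd_mul_right _ _
  have hb' : (fun i => b i + (p:ℤ_[p])^m * ((h i).val : ℤ_[p])) = b + y := by
    funext i; rfl
  obtain ⟨r, hr⟩ := eval_taylor ((p:ℤ_[p])^m) f b y hy
  have hsum : ∑ j, eval b (pderiv j f) * y j
      = (p:ℤ_[p])^m * ∑ j, eval b (pderiv j f) * ((h j).val : ℤ_[p]) := by
    rw [Finset.mul_sum]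
    exact Finset.sum_congr rfl fun j _ => by rw [hy_def]; ring
  rw [hu, hsum] at hr
  set Z : ℤ_[p] := u + (∑ j, eval b (pderiv j f) * ((h j).val : ℤ_[p])) + (p:ℤ_[p])^m * r
    with hZ
  have key : eval (b + y) f = (p:ℤ_[p])^m * Z := by
    rw [hZ]; linear_combination hr
  rw [hb', key, pow_succ]
  rw [mul_dvd_mul_iff_left (pow_ne_zero m (p_ne_zero (p := p)))]
  rw [dvd_p_iff]
  have hZ2 : PadicInt.toZMod Z
      = PadicInt.toZMod u + ∑ j, row j * h j := by
    rw [hZ]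
    rw [map_add, map_add, map_mul, map_sum]
    have hpm : PadicInt.toZMod ((p:ℤ_[p])^m) = 0 := by
      rw [map_pow, map_natCast, ZMod.natCast_self, zero_pow (by omega)]
    rw [hpm, zero_mul, add_zero]
    congr 1
    refine Finset.sum_congr rfl fun j _ => ?_
    rw [map_mul, hrow j, map_natCast, ZMod.natCast_zmod_val]
  rw [hZ2, add_comm, add_eq_zero_iff_eq_neg]

/-! ### the solution sets -/

variable {t : ℕ}

def solSet (F : Fin t → MvPolynomial (Fin n) ℤ_[p]) (g : MvPolynomial (Fin n) ℤ_[p])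
    (k l m : ℕ) (b : Fin n → ℤ_[p]) : Set (Fin n → ℤ_[p]) :=
  {x | (∀ i, (p:ℤ_[p])^m ∣ x i - b i) ∧ (∀ i, (p:ℤ_[p])^k ∣ eval x (F i))
    ∧ (p:ℤ_[p])^l ∣ eval x g}

lemma solSet_meas (F : Fin t → MvPolynomial (Fin n) ℤ_[p]) (g : MvPolynomial (Fin n) ℤ_[p])
    (k l m : ℕ) (b : Fin n → ℤ_[p]) : MeasurableSet (solSet F g k l m b) := by
  have : solSet F g k l m b = {x : Fin n → ℤ_[p] | ∀ i, (p:ℤ_[p])^m ∣ x i - b i}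
      ∩ ((⋂ i, {x : Fin n → ℤ_[p] | (p:ℤ_[p])^k ∣ eval x (F i) - 0})
        ∩ {x : Fin n → ℤ_[p] | (p:ℤ_[p])^l ∣ eval x g - 0}) := by
    ext x; simp [solSet, Set.mem_iInter]
  rw [this]
  exact (meas_coset m b).inter
    ((MeasurableSet.iInter fun i => meas_dvd_set k 0 _ (continuous_mveval (F i))).inter
      (meas_dvd_set l 0 _ (continuous_mveval g)))

lemma solSet_terminal (F : Fin t → MvPolynomial (Fin n) ℤ_[p]) (g : MvPolynomial (Fin n) ℤ_[p])
    (k l m : ℕ) (b : Fin n → ℤ_[p]) (hkm : k ≤ m) (hlm : l ≤ m)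
    (hFb : ∀ i, (p:ℤ_[p])^k ∣ eval b (F i)) (hgb : (p:ℤ_[p])^l ∣ eval b g) :
    solSet F g k l m b = {x : Fin n → ℤ_[p] | ∀ i, (p:ℤ_[p])^m ∣ x i - b i} := by
  ext x
  simp only [solSet, Set.mem_setOf_eq]
  refine ⟨fun h => h.1, fun h => ⟨h, fun i => eval_dvd_trans k m hkm _ b x h (hFb i),
    eval_dvd_trans l m hlm _ b x h hgb⟩⟩

lemma solSet_empty (F : Fin t → MvPolynomial (Fin n) ℤ_[p]) (g : MvPolynomial (Fin n) ℤ_[p])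
    (k l m : ℕ) (b : Fin n → ℤ_[p])
    (hbad : ¬ ((∀ i, (p:ℤ_[p])^(min k m) ∣ eval b (F i)) ∧ (p:ℤ_[p])^(min l m) ∣ eval b g)) :
    solSet F g k l m b = ∅ := by
  rw [Set.eq_empty_iff_forall_notMem]
  intro x hx
  obtain ⟨hcos, hF, hg⟩ := hx
  apply hbad
  constructor
  · intro i
    apply eval_dvd_trans (min k m) m (min_le_right _ _) _ x b
    · intro j
      have := hcos j
      rw [show b j - x j = -(x j - b j) by ring]
      exact this.neg_right
    · exact (pow_dvd_pow _ (min_le_left _ _)).trans (hF i)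
  · apply eval_dvd_trans (min l m) m (min_le_right _ _) _ x b
    · intro j
      have := hcos j
      rw [show b j - x j = -(x j - b j) by ring]
      exact this.neg_right
    · exact (pow_dvd_pow _ (min_le_left _ _)).trans hg

lemma solSet_partition (F : Fin t → MvPolynomial (Fin n) ℤ_[p]) (g : MvPolynomial (Fin n) ℤ_[p])
    (k l m : ℕ) (b : Fin n → ℤ_[p]) :
    solSet F g k l m b = ⋃ h : Fin n → ZMod p,
      solSet F g k l (m+1) (fun i => b i + (p:ℤ_[p])^m * ((h i).val : ℤ_[p])) := by
  ext x
  simp only [Set.mem_iUnion]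
  constructor
  · rintro ⟨hcos, hF, hg⟩
    choose c hc using hcos
    refine ⟨fun i => PadicInt.toZMod (c i), ?_, hF, hg⟩
    intro i
    have h1 : x i - (b i + (p:ℤ_[p])^m * (((PadicInt.toZMod (c i)).val : ℕ) : ℤ_[p]))
        = (p:ℤ_[p])^m * (c i - (((PadicInt.toZMod (c i)).val : ℕ) : ℤ_[p])) := by
      rw [mul_sub, ← hc i]; ring
    rw [h1, pow_succ]
    apply mul_dvd_mul_left
    rw [dvd_p_sub_iff, map_natCast, ZMod.natCast_zmod_val]
  · rintro ⟨h, hcos, hF, hg⟩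
    refine ⟨fun i => ?_, hF, hg⟩
    have h1 : x i - b i = (x i - (b i + (p:ℤ_[p])^m * ((h i).val : ℤ_[p])))
        + (p:ℤ_[p])^m * ((h i).val : ℤ_[p]) := by ring
    rw [h1]
    exact dvd_add ((pow_dvd_pow _ (Nat.le_succ m)).trans (hcos i)) (dvd_mul_right _ _)

lemma solSet_disjoint (F : Fin t → MvPolynomial (Fin n) ℤ_[p]) (g : MvPolynomial (Fin n) ℤ_[p])
    (k l m : ℕ) (b : Fin n → ℤ_[p]) :
    Pairwise (Function.onFun Disjoint fun h : Fin n → ZMod p =>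
      solSet F g k l (m+1) (fun i => b i + (p:ℤ_[p])^m * ((h i).val : ℤ_[p]))) := by
  intro h h' hne
  simp only [Function.onFun, Set.disjoint_left]
  rintro x ⟨hcos, -, -⟩ ⟨hcos', -, -⟩
  apply hne
  funext i
  have h1 := (hcos i).sub (hcos' i)
  have h2 : x i - (b i + (p:ℤ_[p])^m * ((h i).val : ℤ_[p]))
      - (x i - (b i + (p:ℤ_[p])^m * ((h' i).val : ℤ_[p])))
      = (p:ℤ_[p])^m * ((((h' i).val : ℕ) : ℤ_[p]) - (((h i).val : ℕ) : ℤ_[p])) := by ring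
  rw [h2, pow_succ, mul_dvd_mul_iff_left (pow_ne_zero m (p_ne_zero (p := p)))] at h1
  rw [dvd_p_sub_iff, map_natCast, map_natCast, ZMod.natCast_zmod_val, ZMod.natCast_zmod_val] at h1
  exact h1.symm

lemma mulVec_apply {t : ℕ} (M : Matrix (Fin (t+1)) (Fin n) (ZMod p)) (h : Fin n → ZMod p)
    (i : Fin (t+1)) : M.mulVec h i = ∑ j, M i j * h j := by
  simp [Matrix.mulVec, dotProduct]

lemma terminal_case (F : Fin t → MvPolynomial (Fin n) ℤ_[p]) (g : MvPolynomial (Fin n) ℤ_[p])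
    (k l m : ℕ) (b : Fin n → ℤ_[p]) (hkm : k ≤ m) (hlm : l ≤ m)
    (hFb : ∀ i, (p:ℤ_[p])^(min k m) ∣ eval b (F i)) (hgb : (p:ℤ_[p])^(min l m) ∣ eval b g) :
    padicHaar p n (solSet F g k l m b)
      = (p:ENNReal) ^ (-((m*n + (k - min k m)*t + (l - min l m) : ℕ) : ℤ)) := by
  rw [min_eq_left hkm] at hFb
  rw [min_eq_left hlm] at hgb
  rw [solSet_terminal F g k l m b hkm hlm hFb hgb, measure_coset]
  congr 1
  rw [min_eq_left hkm, min_eq_left hlm, Nat.sub_self, Nat.sub_self]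
  push_cast
  ring

lemma main_aux (hnt : t + 1 ≤ n) (F : Fin t → MvPolynomial (Fin n) ℤ_[p])
    (g : MvPolynomial (Fin n) ℤ_[p]) (k l : ℕ) (a : Fin n → ℤ_[p])
    (M : Matrix (Fin (t+1)) (Fin n) (ZMod p))
    (hMsurj : Function.Surjective M.mulVecLin)
    (hMF : ∀ (i : Fin t) j, M (Fin.castSucc i) j = PadicInt.toZMod (eval a (pderiv j (F i))))
    (hMg : ∀ j, M (Fin.last t) j = PadicInt.toZMod (eval a (pderiv j g)))
    (d : ℕ) :
    ∀ (m : ℕ) (b : Fin n → ℤ_[p]), 1 ≤ m → k ≤ m + d → l ≤ m + d →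
      (∀ i, (p:ℤ_[p]) ∣ b i - a i) →
      (∀ i, (p:ℤ_[p])^(min k m) ∣ eval b (F i)) → ((p:ℤ_[p])^(min l m) ∣ eval b g) →
      padicHaar p n (solSet F g k l m b)
        = (p:ENNReal) ^ (-((m*n + (k - min k m)*t + (l - min l m) : ℕ) : ℤ)) := by
  induction d with
  | zero =>
    intro m b hm hkm hlm hba hFb hgb
    exact terminal_case F g k l m b (by omega) (by omega) hFb hgb
  | succ d ih =>
    intro m b hm hkm hlm hba hFb hgb
    by_cases hterm : k ≤ m ∧ l ≤ m
    · exact terminal_case F g k l m b hterm.1 hterm.2 hFb hgb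
    classical
    choose u hu using hFb
    obtain ⟨w, hw⟩ := hgb
    set b' : (Fin n → ZMod p) → (Fin n → ℤ_[p]) :=
      fun h => fun i => b i + (p:ℤ_[p])^m * ((h i).val : ℤ_[p]) with hb'
    set good : (Fin n → ZMod p) → Prop := fun h =>
      (∀ i, (p:ℤ_[p])^(min k (m+1)) ∣ eval (b' h) (F i))
        ∧ (p:ℤ_[p])^(min l (m+1)) ∣ eval (b' h) g with hgood_def
    set S : Finset (Fin (t+1)) :=
      (if m < k then Finset.image Fin.castSucc (Finset.univ : Finset (Fin t)) else ∅)
        ∪ (if m < l then {Fin.last t} else ∅) with hS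
    set v : Fin (t+1) → ZMod p :=
      Fin.lastCases (motive := fun _ => ZMod p) (-PadicInt.toZMod w)
        (fun i => -PadicInt.toZMod (u i)) with hv
    -- the rows of M agree with the Jacobian at b
    have hrowF : ∀ (i : Fin t) j,
        M (Fin.castSucc i) j = PadicInt.toZMod (eval b (pderiv j (F i))) := by
      intro i j
      rw [hMF i j, toZMod_eval_congr (pderiv j (F i)) a b hba]
    have hrowg : ∀ j, M (Fin.last t) j = PadicInt.toZMod (eval b (pderiv j g)) := by
      intro j
      rw [hMg j, toZMod_eval_congr (pderiv j g) a b hba]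
    -- characterize the F-conditions
    have hF_iff : ∀ h : Fin n → ZMod p, (∀ i, (p:ℤ_[p])^(min k (m+1)) ∣ eval (b' h) (F i))
        ↔ (m < k → ∀ i' : Fin t, M.mulVec h (Fin.castSucc i') = v (Fin.castSucc i')) := by
      intro h
      by_cases hk' : m < k
      · have hmin : min k (m+1) = m+1 := min_eq_right (by omega)
        have hmin' : min k m = m := min_eq_right (by omega)
        rw [hmin]
        constructor
        · intro H _ i'
          have := (hensel_cond m hm (F i') b (u i') (by rw [hu i', hmin'])
            (fun j => M (Fin.castSucc i') j) (hrowF i') h).1 (H i')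
          rw [mulVec_apply, this, hv, Fin.lastCases_castSucc]
        · intro H i'
          apply (hensel_cond m hm (F i') b (u i') (by rw [hu i', hmin'])
            (fun j => M (Fin.castSucc i') j) (hrowF i') h).2
          have := H hk' i'
          rw [mulVec_apply, hv, Fin.lastCases_castSucc] at this
          exact this
      · have hmin : min k (m+1) = k := min_eq_left (by omega)
        have hmin' : min k m = k := min_eq_left (by omega)
        rw [hmin]
        constructor
        · intro _ hcon; exact absurd hcon hk'
        · intro _ i
          apply eval_dvd_trans k m (by omega) (F i) b (b' h)
          · intro j
            rw [hb']
            simp only [add_sub_cancel_left]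
            exact dvd_mul_right _ _
          · rw [← hmin']; exact ⟨u i, hu i⟩
    have hg_iff : ∀ h : Fin n → ZMod p, ((p:ℤ_[p])^(min l (m+1)) ∣ eval (b' h) g)
        ↔ (m < l → M.mulVec h (Fin.last t) = v (Fin.last t)) := by
      intro h
      by_cases hl' : m < l
      · have hmin : min l (m+1) = m+1 := min_eq_right (by omega)
        have hmin' : min l m = m := min_eq_right (by omega)
        rw [hmin]
        constructor
        · intro H _
          have := (hensel_cond m hm g b w (by rw [hw, hmin'])
            (fun j => M (Fin.last t) j) hrowg h).1 H
          rw [mulVec_apply, this, hv, Fin.lastCases_last]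
        · intro H
          apply (hensel_cond m hm g b w (by rw [hw, hmin'])
            (fun j => M (Fin.last t) j) hrowg h).2
          have := H hl'
          rw [mulVec_apply, hv, Fin.lastCases_last] at this
          exact this
      · have hmin : min l (m+1) = l := min_eq_left (by omega)
        have hmin' : min l m = l := min_eq_left (by omega)
        rw [hmin]
        constructor
        · intro _ hcon; exact absurd hcon hl'
        · intro _
          apply eval_dvd_trans l m (by omega) g b (b' h)
          · intro j
            rw [hb']
            simp only [add_sub_cancel_left]
            exact dvd_mul_right _ _
          · rw [← hmin']; exact ⟨w, hw⟩
    have hgood_iff : ∀ h : Fin n → ZMod p, good h ↔ ∀ i ∈ S, M.mulVec h i = v i := by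
      intro h
      rw [hgood_def]
      simp only
      rw [hF_iff h, hg_iff h]
      constructor
      · rintro ⟨H1, H2⟩ i hiS
        rw [hS, Finset.mem_union] at hiS
        rcases hiS with hiS | hiS
        · by_cases hk' : m < k
          · rw [if_pos hk', Finset.mem_image] at hiS
            obtain ⟨i', -, rfl⟩ := hiS
            exact H1 hk' i'
          · rw [if_neg hk'] at hiS; exact absurd hiS (Finset.notMem_empty i)
        · by_cases hl' : m < l
          · rw [if_pos hl', Finset.mem_singleton] at hiS
            subst hiS
            exact H2 hl'
          · rw [if_neg hl'] at hiS; exact absurd hiS (Finset.notMem_empty i)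
      · intro H
        constructor
        · intro hk' i'
          apply H
          rw [hS, Finset.mem_union, if_pos hk']
          exact Or.inl (Finset.mem_image_of_mem _ (Finset.mem_univ i'))
        · intro hl'
          apply H
          rw [hS, Finset.mem_union, if_pos hl']
          exact Or.inr (Finset.mem_singleton_self _)
    -- cardinality of S
    have hScard : S.card = (if m < k then t else 0) + (if m < l then 1 else 0) := by
      rw [hS]
      by_cases hk' : m < k <;> by_cases hl' : m < l <;>
        simp only [if_pos, if_neg, hk', hl', if_true, if_false]
      · rw [Finset.card_union_of_disjoint]
        · rw [Finset.card_image_of_injective _ (Fin.castSucc_injective t)]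
          simp
        · simp only [Finset.disjoint_singleton_right, Finset.mem_image]
          rintro ⟨i', -, hi'⟩
          exact absurd hi' (Fin.castSucc_lt_last i').ne
      · rw [Finset.union_empty, Finset.card_image_of_injective _ (Fin.castSucc_injective t)]
        simp
      · simp
      · simp
    have hScard_le : S.card ≤ t + 1 := by
      rw [hScard]; split_ifs <;> omega
    -- the count of good h
    have hcount : (Finset.univ.filter good).card = p ^ (n - S.card) := by
      have h1 : {h : Fin n → ZMod p | ∀ i ∈ S, M.mulVec h i = v i} = {h | good h} := by
        ext h; rw [Set.mem_setOf_eq, Set.mem_setOf_eq, hgood_iff h]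
      have h2 := count_subsystem M hMsurj S v
      rw [h1] at h2
      have h3 : Nat.card {h : Fin n → ZMod p | good h} = (Finset.univ.filter good).card := by
        rw [Nat.card_coe_set_eq, Set.ncard_eq_toFinset_card']
        congr 1
        ext h
        simp [Set.mem_toFinset]
      rw [h3] at h2
      have h4 : p ^ (n - S.card) * p ^ S.card = p ^ n := by
        rw [← pow_add]
        congr 1
        omega
      rw [← h4] at h2
      exact Nat.eq_of_mul_eq_mul_right (pow_pos hp.out.pos _) h2
    -- put everything together
    rw [solSet_partition F g k l m b,
      measure_iUnion (solSet_disjoint F g k l m b) (fun h => solSet_meas F g k l (m+1) _),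
      tsum_fintype]
    have hval : ∀ h : Fin n → ZMod p,
        padicHaar p n (solSet F g k l (m+1) (b' h))
          = if good h then
              (p:ENNReal) ^ (-(((m+1)*n + (k - min k (m+1))*t + (l - min l (m+1)) : ℕ) : ℤ))
            else 0 := by
      intro h
      by_cases hgd : good h
      · rw [if_pos hgd]
        apply ih (m+1) (b' h) (by omega) (by omega) (by omega)
        · intro i
          rw [hb']
          have : b i + (p:ℤ_[p])^m * ((h i).val : ℤ_[p]) - a i
              = (b i - a i) + (p:ℤ_[p])^m * ((h i).val : ℤ_[p]) := by ring
          simp only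
          rw [this]
          exact dvd_add (hba i) (dvd_mul_of_dvd_left (dvd_pow_self _ (by omega)) _)
        · exact hgd.1
        · exact hgd.2
      · rw [if_neg hgd, solSet_empty F g k l (m+1) (b' h) hgd, measure_empty]
    rw [Finset.sum_congr rfl (fun h _ => hval h), ← Finset.sum_filter, Finset.sum_const,
      hcount]
    have hp0 : (p:ENNReal) ≠ 0 := Nat.cast_ne_zero.mpr hp.out.pos.ne'
    have hptop : (p:ENNReal) ≠ ⊤ := ENNReal.natCast_ne_top p
    rw [nsmul_eq_mul]
    push_cast [Nat.cast_pow]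
    rw [← zpow_natCast (p:ENNReal) (n - S.card), ← ENNReal.zpow_add hp0 hptop]
    congr 1
    -- exponent arithmetic
    have hsn : S.card ≤ n := by omega
    rw [hScard] at *
    by_cases hk' : m < k <;> by_cases hl' : m < l
    · rw [min_eq_right (by omega : m ≤ k), min_eq_right (by omega : m+1 ≤ k),
        min_eq_right (by omega : m ≤ l), min_eq_right (by omega : m+1 ≤ l)] 
      rw [if_pos hk', if_pos hl'] at hsn ⊢
      push_cast [Nat.cast_sub hsn, Nat.cast_sub (by omega : m+1 ≤ k),
        Nat.cast_sub (by omega : m+1 ≤ l), Nat.cast_sub (by omega : m ≤ k),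
        Nat.cast_sub (by omega : m ≤ l)]
      ring
    · rw [min_eq_right (by omega : m ≤ k), min_eq_right (by omega : m+1 ≤ k),
        min_eq_left (by omega : l ≤ m), min_eq_left (by omega : l ≤ m+1)]
      rw [if_pos hk', if_neg hl'] at hsn ⊢
      push_cast [Nat.cast_sub hsn, Nat.cast_sub (by omega : m+1 ≤ k),
        Nat.cast_sub (by omega : m ≤ k), Nat.sub_self]
      ring
    · rw [min_eq_left (by omega : k ≤ m), min_eq_left (by omega : k ≤ m+1),
        min_eq_right (by omega : m ≤ l), min_eq_right (by omega : m+1 ≤ l)]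
      rw [if_neg hk', if_pos hl'] at hsn ⊢
      push_cast [Nat.cast_sub hsn, Nat.cast_sub (by omega : m+1 ≤ l),
        Nat.cast_sub (by omega : m ≤ l), Nat.sub_self]
      ring
    · omega

end AklProof


open AklProof

theorem measure_Akl_map (p : ℕ) [Fact p.Prime] (n t : ℕ) (hnt : t + 1 ≤ n)
    (F : Fin t → MvPolynomial (Fin n) ℤ_[p]) (g : MvPolynomial (Fin n) ℤ_[p])
    (k l : ℕ) (hk : 1 ≤ k) (hl : 1 ≤ l) (a : Fin n → ℤ_[p])
    (hFa : ∀ i, (p : ℤ_[p]) ∣ eval a (F i)) (hga : (p : ℤ_[p]) ∣ eval a g)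
    (hrank : Matrix.rank (Matrix.of fun (i : Fin (t + 1)) (j : Fin n) =>
      Fin.lastCases (motive := fun _ => ZMod p)
        (PadicInt.toZMod (eval a (pderiv j g)))
        (fun i' => PadicInt.toZMod (eval a (pderiv j (F i')))) i) = t + 1) :
    padicHaar p n {x : Fin n → ℤ_[p] | (∀ i, (p : ℤ_[p]) ∣ (x i - a i)) ∧
        (∀ i, (p : ℤ_[p]) ^ k ∣ eval x (F i)) ∧ (p : ℤ_[p]) ^ l ∣ eval x g}
      = (p : ENNReal) ^ (-(n : ℤ) - ((k : ℤ) - 1) * t - (l : ℤ) + 1) := by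
  set M : Matrix (Fin (t+1)) (Fin n) (ZMod p) :=
    Matrix.of fun (i : Fin (t + 1)) (j : Fin n) =>
      Fin.lastCases (motive := fun _ => ZMod p)
        (PadicInt.toZMod (eval a (pderiv j g)))
        (fun i' => PadicInt.toZMod (eval a (pderiv j (F i')))) i with hM
  have hMsurj : Function.Surjective M.mulVecLin := rank_surj M hrank
  have hMF : ∀ (i : Fin t) j,
      M (Fin.castSucc i) j = PadicInt.toZMod (eval a (pderiv j (F i))) := by
    intro i j
    rw [hM]
    simp [Fin.lastCases_castSucc]
  have hMg : ∀ j, M (Fin.last t) j = PadicInt.toZMod (eval a (pderiv j g)) := by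
    intro j
    rw [hM]
    simp [Fin.lastCases_last]
  have hset : {x : Fin n → ℤ_[p] | (∀ i, (p : ℤ_[p]) ∣ (x i - a i)) ∧
      (∀ i, (p : ℤ_[p]) ^ k ∣ eval x (F i)) ∧ (p : ℤ_[p]) ^ l ∣ eval x g}
      = solSet F g k l 1 a := by
    ext x
    simp [solSet, pow_one]
  rw [hset]
  have := main_aux hnt F g k l a M hMsurj hMF hMg (max k l) 1 a le_rfl (by omega) (by omega)
    (fun i => by simp) (fun i => by rw [min_eq_right hk, pow_one]; exact hFa i)
    (by rw [min_eq_right hl, pow_one]; exact hga)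
  rw [this]
  congr 1
  rw [min_eq_right hk, min_eq_right hl]
  push_cast [Nat.cast_sub hk, Nat.cast_sub hl]
  ring
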